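/- If X ~ BGamma(α,β,δ) and ν > −α is real, then E[X^ν] = [2 − 2(δ/β)(ν+α) + (δ²/β²)(ν+α)(ν+α+1)] · Γ(ν+α) / (Z β^ν Γ(α)), where Z = 2 + (αδ/β)[(1+α)δ/β − 2]. -/

import Mathlib

open MeasureTheory Real Set

noncomputable def Zc (α β δ : ℝ) : ℝ := 2 + (α * δ / β) * ((1 + α) * δ / β - 2)

noncomputable def bgammaPDF (α β δ x : ℝ) : ℝ :=
  (1 + (1 - δ * x) ^ 2) / Zc α β δ * (β ^ α / Real.Gamma α) * x ^ (α - 1) * Real.exp (-β * x)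

noncomputable def gammaPDF (α β x : ℝ) : ℝ :=
  β ^ α / Real.Gamma α * x ^ (α - 1) * Real.exp (-β * x)

lemma key_integrable {s β : ℝ} (hs : 0 < s) (hβ : 0 < β) :
    IntegrableOn (fun x : ℝ => x ^ (s - 1) * Real.exp (-β * x)) (Ioi 0) := by
  have := integrableOn_rpow_mul_exp_neg_mul_rpow (p := 1) (s := s - 1) (b := β)
    (by linarith) one_pos hβ
  refine this.congr_fun (fun x hx => ?_) measurableSet_Ioi
  beta_reduce; rw [Real.rpow_one]

lemma key_integral {s β : ℝ} (hs : 0 < s) (hβ : 0 < β) :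
    ∫ x in Ioi (0:ℝ), x ^ (s - 1) * Real.exp (-β * x) = Real.Gamma s / β ^ s := by
  have h := Real.integral_rpow_mul_exp_neg_mul_Ioi hs hβ
  rw [show (∫ x in Ioi (0:ℝ), x ^ (s - 1) * Real.exp (-β * x)) =
      ∫ t in Ioi (0:ℝ), t ^ (s - 1) * Real.exp (-(β * t)) by
    refine setIntegral_congr_fun measurableSet_Ioi (fun x hx => ?_); ring_nf, h,
    Real.div_rpow (by norm_num) hβ.le, Real.one_rpow]
  field_simp

theorem bgamma_moments (α β δ ν : ℝ) (hα : 0 < α) (hβ : 0 < β) (hν : -α < ν) :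
    ∫ x in Ioi (0:ℝ), x ^ ν * bgammaPDF α β δ x =
      (2 - 2 * (δ / β) * (ν + α) + (δ / β) ^ 2 * (ν + α) * (ν + α + 1)) *
        Real.Gamma (ν + α) / (Zc α β δ * β ^ ν * Real.Gamma α) := by
  set Z := Zc α β δ with hZ
  have h1 : (0:ℝ) < ν + α := by linarith
  have h2 : (0:ℝ) < ν + α + 1 := by linarith
  have h3 : (0:ℝ) < ν + α + 2 := by linarith
  set C : ℝ := β ^ α / Real.Gamma α / Z with hC
  have hcong : ∀ x ∈ Ioi (0:ℝ), x ^ ν * bgammaPDF α β δ x =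
      C * (2 * (x ^ (ν + α - 1) * Real.exp (-β * x))
        + (-2 * δ) * (x ^ (ν + α + 1 - 1) * Real.exp (-β * x))
        + δ ^ 2 * (x ^ (ν + α + 2 - 1) * Real.exp (-β * x))) := by
    intro x hx
    have hx0 : (0:ℝ) < x := hx
    have e1 : x ^ (ν + α - 1) = x ^ ν * x ^ (α - 1) := by
      rw [← Real.rpow_add hx0]; ring_nf
    have e2 : x ^ (ν + α + 1 - 1) = x * (x ^ ν * x ^ (α - 1)) := by
      rw [show ν + α + 1 - 1 = 1 + (ν + (α - 1)) by ring, Real.rpow_add hx0,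
        Real.rpow_one, Real.rpow_add hx0]
    have e3 : x ^ (ν + α + 2 - 1) = x ^ (2:ℕ) * (x ^ ν * x ^ (α - 1)) := by
      rw [show ν + α + 2 - 1 = (2:ℕ) + (ν + (α - 1)) by push_cast; ring,
        Real.rpow_add hx0, Real.rpow_natCast, Real.rpow_add hx0]
    rw [bgammaPDF, e1, e2, e3, hC]
    ring
  rw [setIntegral_congr_fun measurableSet_Ioi hcong]
  have i1 := key_integrable h1 hβ
  have i2 := key_integrable h2 hβ
  have i3 := key_integrable h3 hβ
  have i12 : IntegrableOn (fun x : ℝ => 2 * (x ^ (ν + α - 1) * Real.exp (-β * x))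
      + (-2 * δ) * (x ^ (ν + α + 1 - 1) * Real.exp (-β * x))) (Ioi 0) :=
    (i1.const_mul 2).add (i2.const_mul _)
  rw [integral_const_mul, integral_add i12
      (i3.const_mul _), integral_add (i1.const_mul 2) (i2.const_mul _),
    integral_const_mul, integral_const_mul, integral_const_mul,
    key_integral h1 hβ, key_integral h2 hβ, key_integral h3 hβ,
    Real.Gamma_add_one h1.ne', show ν + α + 2 = (ν + α + 1) + 1 by ring,
    Real.Gamma_add_one h2.ne', Real.Gamma_add_one h1.ne']
  have hβν : (0:ℝ) < β ^ ν := Real.rpow_pos_of_pos hβ ν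
  have hβα : (0:ℝ) < β ^ α := Real.rpow_pos_of_pos hβ α
  have hΓ : (0:ℝ) < Real.Gamma α := Real.Gamma_pos_of_pos hα
  have hba : β ^ (ν + α) = β ^ ν * β ^ α := Real.rpow_add hβ ν α
  have hba1 : β ^ (ν + α + 1) = β ^ ν * β ^ α * β := by
    rw [Real.rpow_add hβ, Real.rpow_one, hba]
  have hba2 : β ^ (ν + α + 1 + 1) = β ^ ν * β ^ α * β ^ (2:ℕ) := by
    rw [show ν + α + 1 + 1 = (ν + α) + (2:ℕ) by push_cast; ring, Real.rpow_add hβ,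
      Real.rpow_natCast, hba]
  set Γa := Real.Gamma (ν + α) with hΓa
  have key : β ^ α / Real.Gamma α *
      (2 * (Γa / (β ^ ν * β ^ α)) + -2 * δ * ((ν + α) * Γa / (β ^ ν * β ^ α * β)) +
        δ ^ 2 * ((ν + α + 1) * ((ν + α) * Γa) / (β ^ ν * β ^ α * β ^ (2:ℕ)))) =
      (2 - 2 * (δ / β) * (ν + α) + (δ / β) ^ 2 * (ν + α) * (ν + α + 1)) * Γa /
        (β ^ ν * Real.Gamma α) := by
    field_simp
    ring
  rw [hba, hba1, hba2, hC,
    show Z * β ^ ν * Real.Gamma α = (β ^ ν * Real.Gamma α) * Z by ring]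
  conv_rhs => rw [← div_div, ← key]
  ring
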